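/- (Stochasticity, conservation and positivity of the fused bulk vertex weights.) Let I ≥ 1 be an integer, 0 < q < 1, and 0 < κ < q^{(I−1)/2}. For 0 ≤ a, b, c, d ≤ I define 𝚁_{a,b}^{c,d} := R^I(κ²)_{b,a}^{d,c} (note κ²·q^{b−a} ∈ (0,1) for all 1 ≤ a, b ≤ I, so R̊^I(κ²) is well defined). Then: (i) 𝚁_{a,b}^{c,d} = 0 whenever a + b ≠ c + d; (ii) 𝚁_{a,b}^{c,d} is real and strictly positive whenever a + b = c + d; (iii) Σ_{c,d=0}^{I} 𝚁_{a,b}^{c,d} = 1 for all 0 ≤ a, b ≤ I. -/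

import Mathlib

open scoped Matrix ComplexOrder

noncomputable section

/-- Entries `R(u)_{a,b}^{c,d}` of the unfused stochastic six-vertex `R`-matrix. -/
def Rent (q u : ℂ) (a b c d : Fin 2) : ℂ :=
  if a = 0 ∧ b = 0 ∧ c = 0 ∧ d = 0 then 1
  else if a = 1 ∧ b = 1 ∧ c = 1 ∧ d = 1 then 1
  else if a = 0 ∧ b = 1 ∧ c = 0 ∧ d = 1 then q * (1 - u) / (1 - q * u)
  else if a = 0 ∧ b = 1 ∧ c = 1 ∧ d = 0 then (1 - q) / (1 - q * u)
  else if a = 1 ∧ b = 0 ∧ c = 0 ∧ d = 1 then u * (1 - q) / (1 - q * u)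
  else if a = 1 ∧ b = 0 ∧ c = 1 ∧ d = 0 then (1 - u) / (1 - q * u)
  else 0

/-- The unfused `R`-matrix as an operator (matrix) on `ℂ² ⊗ ℂ²`;
row index `(c,d)` (output), column index `(a,b)` (input), so that
`R(u)(e_a ⊗ e_b) = Σ_{c,d} R(u)_{a,b}^{c,d} e_c ⊗ e_d`. -/
def Rmat (q u : ℂ) : Matrix (Fin 2 × Fin 2) (Fin 2 × Fin 2) ℂ :=
  fun cd ab => Rent q u ab.1 ab.2 cd.1 cd.2

/-- Entries `K(u)_a^d` of the unfused boundary `K`-matrix, parameters `fa = 𝔞`, `fc = 𝔠`. -/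
def Kent (fa fc u : ℂ) (a d : Fin 2) : ℂ :=
  if a = 0 ∧ d = 0 then ((fc - fa) * u ^ 2 + u) / (fc * u ^ 2 + u - fa)
  else if a = 0 ∧ d = 1 then fa * (u ^ 2 - 1) / (fc * u ^ 2 + u - fa)
  else if a = 1 ∧ d = 0 then fc * (u ^ 2 - 1) / (fc * u ^ 2 + u - fa)
  else (fc - fa + u) / (fc * u ^ 2 + u - fa)

/-- The unfused `K`-matrix as an operator on `ℂ²`: row `d` (output), column `a` (input). -/
def Kmat (fa fc u : ℂ) : Matrix (Fin 2) (Fin 2) ℂ := fun d a => Kent fa fc u a d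

/-- Entries `K̄(u)_b^c` of the unfused boundary `K̄`-matrix, parameters `fb = 𝔟`, `fd = 𝔡`. -/
def Kbent (fb fd u : ℂ) (b c : Fin 2) : ℂ :=
  if b = 0 ∧ c = 0 then ((fb - fd) * u ^ 2 - u) / (fb * u ^ 2 - u - fd)
  else if b = 0 ∧ c = 1 then fd * (u ^ 2 - 1) / (fb * u ^ 2 - u - fd)
  else if b = 1 ∧ c = 0 then fb * (u ^ 2 - 1) / (fb * u ^ 2 - u - fd)
  else (fb - fd - u) / (fb * u ^ 2 - u - fd)

/-- The operator `P` on `ℂ² ⊗ ℂ²` swapping the two tensor factors. -/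
def swapMat : Matrix (Fin 2 × Fin 2) (Fin 2 × Fin 2) ℂ :=
  fun p r => if p.1 = r.2 ∧ p.2 = r.1 then 1 else 0

/-- `Ř(u) = P ∘ R(u)`. -/
def RcheckMat (q u : ℂ) : Matrix (Fin 2 × Fin 2) (Fin 2 × Fin 2) ℂ := swapMat * Rmat q u

/-- A two-site operator `T` placed at sites `i, j` of an `n`-fold tensor power of `ℂ²`,
acting as the identity on the other factors.  Here `(ℂ²)^{⊗n}` is identified with the
function space `(Fin n → Fin 2) → ℂ` with its standard basis. -/
def emb2 {n : ℕ} (i j : Fin n) (T : Matrix (Fin 2 × Fin 2) (Fin 2 × Fin 2) ℂ) :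
    Matrix (Fin n → Fin 2) (Fin n → Fin 2) ℂ :=
  fun x y => T (x i, x j) (y i, y j) * (if ∀ k, k ≠ i → k ≠ j → x k = y k then 1 else 0)

/-- A one-site operator `T` placed at site `i` of an `n`-fold tensor power of `ℂ²`. -/
def emb1 {n : ℕ} (i : Fin n) (T : Matrix (Fin 2) (Fin 2) ℂ) :
    Matrix (Fin n → Fin 2) (Fin n → Fin 2) ℂ :=
  fun x y => T (x i) (y i) * (if ∀ k, k ≠ i → x k = y k then 1 else 0)

/-- The permutation operator `P_ω` on `(ℂ²)^{⊗n}`: it puts the `k`-th factor in position `ω(k)`. -/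
def permMat (n : ℕ) (ω : Equiv.Perm (Fin n)) :
    Matrix (Fin n → Fin 2) (Fin n → Fin 2) ℂ :=
  fun x y => if (fun k => x (ω k)) = y then 1 else 0

/-- `inv(a)` : the number of inversions of a `{0,1}`-word. -/
def invCount {I : ℕ} (x : Fin I → Fin 2) : ℕ :=
  (Finset.univ.filter (fun p : Fin I × Fin I => p.1 < p.2 ∧ x p.2 < x p.1)).card

/-- `Z_q(I;m)`. -/
def Zq (I : ℕ) (q : ℂ) (m : ℕ) : ℂ :=
  ∑ x ∈ Finset.univ.filter (fun x : Fin I → Fin 2 => (∑ j, ((x j : ℕ))) = m),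
    q ^ invCount x

/-- The projection `Π : (ℂ²)^{⊗I} → ℂ^{I+1}`, `e_{a₁…a_I} ↦ e_{Σ a_j}`. -/
def PiMat (I : ℕ) : Matrix (Fin (I + 1)) (Fin I → Fin 2) ℂ :=
  fun m x => if (∑ j, ((x j : ℕ))) = (m : ℕ) then 1 else 0

/-- The injection `Π̂ : ℂ^{I+1} → (ℂ²)^{⊗I}`. -/
def hatPiMat (I : ℕ) (q : ℂ) : Matrix (Fin I → Fin 2) (Fin (I + 1)) ℂ :=
  fun x m => if (∑ j, ((x j : ℕ))) = (m : ℕ) then q ^ invCount x / Zq I q (m : ℕ) else 0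

/-- `F = Π̂ ∘ Π`, the projector onto the `q`-exchangeable subspace. -/
def Fmat (I : ℕ) (q : ℂ) : Matrix (Fin I → Fin 2) (Fin I → Fin 2) ℂ :=
  hatPiMat I q * PiMat I

/-- Restriction of a configuration on `2I` sites to the first `I` sites. -/
def firstHalf {I : ℕ} (x : Fin (2 * I) → Fin 2) : Fin I → Fin 2 :=
  fun k => x ⟨k.1, by have := k.isLt; omega⟩

/-- Restriction of a configuration on `2I` sites to the last `I` sites. -/
def secondHalf {I : ℕ} (x : Fin (2 * I) → Fin 2) : Fin I → Fin 2 :=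
  fun k => x ⟨k.1 + I, by have := k.isLt; omega⟩

/-- `F ⊗ F` acting on `(ℂ²)^{⊗2I}`. -/
def FFmat (I : ℕ) (q : ℂ) : Matrix (Fin (2 * I) → Fin 2) (Fin (2 * I) → Fin 2) ℂ :=
  fun x y => Fmat I q (firstHalf x) (firstHalf y) * Fmat I q (secondHalf x) (secondHalf y)

/-- `Π ⊗ Π : (ℂ²)^{⊗2I} → ℂ^{I+1} ⊗ ℂ^{I+1}`. -/
def PiPiMat (I : ℕ) : Matrix (Fin (I + 1) × Fin (I + 1)) (Fin (2 * I) → Fin 2) ℂ :=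
  fun p x => PiMat I p.1 (firstHalf x) * PiMat I p.2 (secondHalf x)

/-- `Π̂ ⊗ Π̂ : ℂ^{I+1} ⊗ ℂ^{I+1} → (ℂ²)^{⊗2I}`. -/
def hatPiPiMat (I : ℕ) (q : ℂ) : Matrix (Fin (2 * I) → Fin 2) (Fin (I + 1) × Fin (I + 1)) ℂ :=
  fun x p => hatPiMat I q (firstHalf x) p.1 * hatPiMat I q (secondHalf x) p.2

/-- The fused bulk operator `R̊^I(u)` on `(ℂ²)^{⊗2I}` : the ordered product (composition,
factors written from left to right) over `a = I, I-1, …, 1` and, inside, `b = 1, 2, …, I`,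
of the operators `R(u q^{b-a})_{b, a+I}` (sites are 1-based; here `a = I - a'`, `b = b' + 1`). -/
def Rring (I : ℕ) (q u : ℂ) : Matrix (Fin (2 * I) → Fin 2) (Fin (2 * I) → Fin 2) ℂ :=
  ((List.finRange I).map (fun a' =>
    ((List.finRange I).map (fun b' =>
      emb2 (⟨b'.1, by have := b'.isLt; omega⟩ : Fin (2 * I))
        ⟨2 * I - 1 - a'.1, by have := a'.isLt; omega⟩
        (Rmat q (u * q ^ (((b'.1 : ℤ) + 1) - ((I : ℤ) - (a'.1 : ℤ))))))).prod)).prod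

/-- The fused `R`-matrix `R^I(u) = (Π⊗Π) ∘ R̊^I(u) ∘ (Π̂⊗Π̂)` on `ℂ^{I+1} ⊗ ℂ^{I+1}`;
its entry at row `(c,d)`, column `(a,b)` is `R^I(u)_{a,b}^{c,d}`. -/
def RI (I : ℕ) (q u : ℂ) :
    Matrix (Fin (I + 1) × Fin (I + 1)) (Fin (I + 1) × Fin (I + 1)) ℂ :=
  PiPiMat I * Rring I q u * hatPiPiMat I q

/-- Real powers of a positive real number, viewed in `ℂ`. -/
def qrpow (q : ℝ) (r : ℝ) : ℂ := ((q ^ r : ℝ) : ℂ)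

/-- The fused boundary operator `K̊^I(u)` on `(ℂ²)^{⊗I}` : `P_rev` composed with the ordered
product over `a = I, …, 1` of `K(u q^{(I+1)/2-a})_a` composed with the ordered product over
`b = a-1, …, 1` of `R(u² q^{I+1-a-b})_{b,a}` (sites 1-based; `a = I - a'`, `b = a - 1 - b'`). -/
def Kring (I : ℕ) (q : ℝ) (fa fc : ℂ) (u : ℂ) :
    Matrix (Fin I → Fin 2) (Fin I → Fin 2) ℂ :=
  permMat I (Fin.revPerm) *
  ((List.finRange I).map (fun a' =>
    emb1 (⟨I - 1 - a'.1, by have := a'.isLt; omega⟩ : Fin I)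
        (Kmat fa fc (u * qrpow q (((I : ℝ) + 1) / 2 - ((I : ℝ) - (a'.1 : ℝ))))) *
    ((List.finRange (I - 1 - a'.1)).map (fun b' =>
      emb2 (⟨I - a'.1 - 2 - b'.1, by have := a'.isLt; have := b'.isLt; omega⟩ : Fin I)
        ⟨I - 1 - a'.1, by have := a'.isLt; omega⟩
        (Rmat (q : ℂ)
          (u ^ 2 * (q : ℂ) ^ (((I : ℤ) + 1) - ((I : ℤ) - (a'.1 : ℤ)) -
            ((I : ℤ) - (a'.1 : ℤ) - 1 - (b'.1 : ℤ))))))).prod)).prod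

/-- The fused `K`-matrix `K^I(u) = Π ∘ K̊^I(u) ∘ Π̂` on `ℂ^{I+1}`;
its entry at row `d`, column `a` is `K^I(u)_a^d`. -/
def KI (I : ℕ) (q : ℝ) (fa fc u : ℂ) : Matrix (Fin (I + 1)) (Fin (I + 1)) ℂ :=
  PiMat I * Kring I q fa fc u * hatPiMat I (q : ℂ)

/-- `M₀(u) = u·1 + 𝐞`, `M₁(u) = u⁻¹·1 + 𝐝` in a ℂ-algebra `A`. -/
def Mop {A : Type*} [Ring A] [Algebra ℂ A] (dd ee : A) (i : Fin 2) (u : ℂ) : A :=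
  if i = 0 then algebraMap ℂ A u + ee else algebraMap ℂ A u⁻¹ + dd

/-- The fused elements `M^I_ζ(u)`. -/
def MIop {A : Type*} [Ring A] [Algebra ℂ A] (dd ee : A) (I : ℕ) (q : ℝ) (ζ : ℕ) (u : ℂ) : A :=
  ∑ z ∈ Finset.univ.filter (fun z : Fin I → Fin 2 => (∑ j, ((z j : ℕ))) = ζ),
    ((List.finRange I).map (fun a =>
      Mop dd ee (z a) (u * qrpow q (((a.1 : ℝ) + 1) - ((I : ℝ) + 1) / 2)))).prod

end

section Aux
open Matrix
variable {qr ur : ℝ}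

lemma ofReal_pos' {r : ℝ} (h : 0 < r) : (0:ℂ) < (r:ℂ) := by exact_mod_cast h

lemma Rent_nonneg (hq0 : 0 < qr) (hq1 : qr < 1) (hu0 : 0 < ur) (hu1 : ur < 1)
    (a b c d : Fin 2) : 0 ≤ Rent (qr:ℂ) (ur:ℂ) a b c d := by
  have hqu : (0:ℝ) < 1 - qr * ur := by nlinarith
  fin_cases a <;> fin_cases b <;> fin_cases c <;> fin_cases d <;>
    simp only [Rent, if_true, if_false, and_self, Fin.mk_one, Fin.mk_zero,
      reduceCtorEq, and_false, false_and, one_ne_zero, zero_ne_one] <;>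
    norm_num <;> norm_cast <;> (apply div_nonneg <;> nlinarith)

lemma Rent_keep_pos (hq0 : 0 < qr) (hq1 : qr < 1) (hu0 : 0 < ur) (hu1 : ur < 1)
    (a b : Fin 2) : 0 < Rent (qr:ℂ) (ur:ℂ) a b a b := by
  have hqu : (0:ℝ) < 1 - qr * ur := by nlinarith
  fin_cases a <;> fin_cases b <;> simp only [Rent] <;> norm_num <;> norm_cast <;>
    (apply div_pos <;> nlinarith)

lemma Rent_swap_pos (hq0 : 0 < qr) (hq1 : qr < 1) (hu0 : 0 < ur) (hu1 : ur < 1)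
    (a b : Fin 2) (hab : a ≠ b) : 0 < Rent (qr:ℂ) (ur:ℂ) a b b a := by
  have hqu : (0:ℝ) < 1 - qr * ur := by nlinarith
  fin_cases a <;> fin_cases b <;> simp only [Rent] <;> first
    | exact absurd rfl hab
    | (norm_num <;> norm_cast <;> (apply div_pos <;> nlinarith))

lemma Rent_conserve {q u : ℂ} (a b c d : Fin 2)
    (h : (a:ℕ) + (b:ℕ) ≠ (c:ℕ) + (d:ℕ)) : Rent q u a b c d = 0 := by
  fin_cases a <;> fin_cases b <;> fin_cases c <;> fin_cases d <;>
    first | (exfalso; exact h (by rfl)) | simp [Rent]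

lemma Rent_colsum {q u : ℂ} (h : 1 - q * u ≠ 0) (a b : Fin 2) :
    ∑ c : Fin 2, ∑ d : Fin 2, Rent q u a b c d = 1 := by
  have h' : 1 - u * q ≠ 0 := by rwa [mul_comm q u] at h
  fin_cases a <;> fin_cases b <;> simp [Rent, Fin.sum_univ_two] <;>
    first | decide | (field_simp; ring)

end Aux
section Aux2
open Matrix

abbrev Cfg (n : ℕ) := Fin n → Fin 2

def tot {n : ℕ} (x : Cfg n) : ℕ := ∑ k, (x k : ℕ)

variable {n : ℕ}

lemma emb2_eq_ite (i j : Fin n) (T : Matrix (Fin 2 × Fin 2) (Fin 2 × Fin 2) ℂ)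
    (x y : Cfg n) :
    emb2 i j T x y = if (∀ k, k ≠ i → k ≠ j → x k = y k) then T (x i, x j) (y i, y j) else 0 := by
  unfold emb2; split_ifs <;> simp

lemma emb2_colsum (i j : Fin n) (hij : i ≠ j) (T : Matrix (Fin 2 × Fin 2) (Fin 2 × Fin 2) ℂ)
    (hT : ∀ p : Fin 2 × Fin 2, ∑ r : Fin 2 × Fin 2, T r p = 1) (y : Cfg n) :
    ∑ x, emb2 i j T x y = 1 := by
  have key : ∑ x, emb2 i j T x y
      = ∑ r : Fin 2 × Fin 2, T r (y i, y j) := by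
    simp only [emb2_eq_ite]
    rw [Finset.sum_ite, Finset.sum_const_zero, add_zero]
    apply Finset.sum_nbij' (fun x => (x i, x j))
      (fun p => Function.update (Function.update y i p.1) j p.2)
    · intro x hx; exact Finset.mem_univ _
    · intro p hp
      simp only [Finset.mem_filter, Finset.mem_univ, true_and]
      intro k hki hkj
      rw [Function.update_of_ne hkj, Function.update_of_ne hki]
    · intro x hx
      simp only [Finset.mem_filter, Finset.mem_univ, true_and] at hx
      funext k
      by_cases hkj : k = j
      · subst hkj; rw [Function.update_self]
      · rw [Function.update_of_ne hkj]
        by_cases hki : k = i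
        · subst hki; rw [Function.update_self]
        · rw [Function.update_of_ne hki]; exact (hx k hki hkj).symm
    · intro p hp
      have h1 : Function.update (Function.update y i p.1) j p.2 i = p.1 := by
        rw [Function.update_of_ne hij, Function.update_self]
      have h2 : Function.update (Function.update y i p.1) j p.2 j = p.2 :=
        Function.update_self _ _ _
      simp [h1, h2]
    · intro x hx
      simp only [Finset.mem_filter, Finset.mem_univ, true_and] at hx
      congr 1
  rw [key, hT]

lemma emb2_nonneg (i j : Fin n) (T : Matrix (Fin 2 × Fin 2) (Fin 2 × Fin 2) ℂ)
    (hT : ∀ p r, 0 ≤ T p r) (x y : Cfg n) : 0 ≤ emb2 i j T x y := by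
  rw [emb2_eq_ite]; split_ifs
  · exact hT _ _
  · exact le_refl _

lemma tot_split_two (i j : Fin n) (hij : i ≠ j) (x : Cfg n) :
    tot x = (x i : ℕ) + (x j : ℕ) + ∑ k ∈ (Finset.univ.erase i).erase j, (x k : ℕ) := by
  unfold tot
  rw [← Finset.add_sum_erase _ _ (Finset.mem_univ i)]
  rw [← Finset.add_sum_erase _ (fun k => ((x k : ℕ))) (Finset.mem_erase.2 ⟨Ne.symm hij, Finset.mem_univ j⟩)]
  rw [Finset.erase_right_comm]
  ring

lemma emb2_conserve (i j : Fin n) (hij : i ≠ j) (T : Matrix (Fin 2 × Fin 2) (Fin 2 × Fin 2) ℂ)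
    (hT : ∀ p r : Fin 2 × Fin 2, T p r ≠ 0 → (p.1:ℕ) + (p.2:ℕ) = (r.1:ℕ) + (r.2:ℕ))
    (x y : Cfg n) (h : emb2 i j T x y ≠ 0) : tot x = tot y := by
  rw [emb2_eq_ite] at h
  split_ifs at h with hoff
  · have hT' := hT _ _ h
    simp only at hT'
    rw [tot_split_two i j hij x, tot_split_two i j hij y, hT']
    congr 1
    apply Finset.sum_congr rfl
    intro k hk
    simp only [Finset.mem_erase] at hk
    rw [hoff k hk.2.1 hk.1]
  · exact absurd rfl h

lemma emb2_keep_pos {qr ur : ℝ} (hq0 : 0 < qr) (hq1 : qr < 1) (hu0 : 0 < ur) (hu1 : ur < 1)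
    (i j : Fin n) (w : Cfg n) : 0 < emb2 i j (Rmat (qr:ℂ) (ur:ℂ)) w w := by
  rw [emb2_eq_ite, if_pos (fun k _ _ => rfl)]
  exact Rent_keep_pos hq0 hq1 hu0 hu1 _ _

lemma emb2_swap_pos {qr ur : ℝ} (hq0 : 0 < qr) (hq1 : qr < 1) (hu0 : 0 < ur) (hu1 : ur < 1)
    (i j : Fin n) (w w' : Cfg n)
    (h1 : w' i = w j) (h2 : w' j = w i) (h3 : w i ≠ w j)
    (h4 : ∀ k, k ≠ i → k ≠ j → w' k = w k) :
    0 < emb2 i j (Rmat (qr:ℂ) (ur:ℂ)) w' w := by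
  rw [emb2_eq_ite, if_pos h4]
  show 0 < Rent _ _ (w i) (w j) (w' i) (w' j)
  rw [h1, h2]
  exact Rent_swap_pos hq0 hq1 hu0 hu1 _ _ h3

end Aux2
section Aux3
open Matrix
variable {n : ℕ}

/-- `Good M`: nonneg entries, conserves `tot`, columns sum to 1. -/
def Good (M : Matrix (Cfg n) (Cfg n) ℂ) : Prop :=
  (∀ x y, 0 ≤ M x y) ∧ (∀ x y, M x y ≠ 0 → tot x = tot y) ∧ (∀ y, ∑ x, M x y = 1)

lemma good_one : Good (1 : Matrix (Cfg n) (Cfg n) ℂ) := by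
  refine ⟨fun x y => ?_, fun x y h => ?_, fun y => ?_⟩
  · rw [Matrix.one_apply]; split_ifs
    · exact zero_le_one
    · exact le_refl 0
  · rw [Matrix.one_apply] at h
    split_ifs at h with hxy
    · rw [hxy]
    · exact absurd rfl h
  · simp [Matrix.one_apply]

lemma good_mul {A B : Matrix (Cfg n) (Cfg n) ℂ} (hA : Good A) (hB : Good B) :
    Good (A * B) := by
  obtain ⟨hA1, hA2, hA3⟩ := hA
  obtain ⟨hB1, hB2, hB3⟩ := hB
  refine ⟨fun x y => ?_, fun x y h => ?_, fun y => ?_⟩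
  · rw [Matrix.mul_apply]
    exact Finset.sum_nonneg fun z _ => mul_nonneg (hA1 x z) (hB1 z y)
  · rw [Matrix.mul_apply] at h
    obtain ⟨z, -, hz⟩ := Finset.exists_ne_zero_of_sum_ne_zero h
    have h1 : A x z ≠ 0 := fun h0 => hz (by rw [h0, zero_mul])
    have h2 : B z y ≠ 0 := fun h0 => hz (by rw [h0, mul_zero])
    rw [hA2 x z h1, hB2 z y h2]
  · simp only [Matrix.mul_apply]
    rw [Finset.sum_comm]
    have : ∀ z ∈ Finset.univ, ∑ x : Cfg n, A x z * B z y = B z y := by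
      intro z _
      rw [← Finset.sum_mul, hA3 z, one_mul]
    rw [Finset.sum_congr rfl this, hB3]

lemma good_prod {L : List (Matrix (Cfg n) (Cfg n) ℂ)} (h : ∀ M ∈ L, Good M) :
    Good L.prod := by
  induction L with
  | nil => exact good_one
  | cons M L ih =>
    rw [List.prod_cons]
    exact good_mul (h M List.mem_cons_self) (ih fun N hN => h N (List.mem_cons_of_mem M hN))

/-- Reachability through a list of matrices (first list element acts last). -/
def Reach : List (Matrix (Cfg n) (Cfg n) ℂ) → Cfg n → Cfg n → Prop
  | [], x, y => x = y
  | M :: L, x, y => ∃ z, 0 < M x z ∧ Reach L z y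

lemma reach_pos {L : List (Matrix (Cfg n) (Cfg n) ℂ)} (hL : ∀ M ∈ L, Good M)
    {x y : Cfg n} (h : Reach L x y) : 0 < L.prod x y := by
  induction L generalizing x with
  | nil =>
    rw [show x = y from h, List.prod_nil]
    simp [Matrix.one_apply]
  | cons M L ih =>
    obtain ⟨z, hz1, hz2⟩ := h
    have hpos := ih (fun N hN => hL N (List.mem_cons_of_mem M hN)) hz2
    rw [List.prod_cons, Matrix.mul_apply]
    apply Finset.sum_pos'
    · intro w _
      apply mul_nonneg ((hL M List.mem_cons_self).1 x w)
      exact (good_prod fun N hN => hL N (List.mem_cons_of_mem M hN)).1 w y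
    · exact ⟨z, Finset.mem_univ z, mul_pos hz1 hpos⟩

lemma reach_append {L1 L2 : List (Matrix (Cfg n) (Cfg n) ℂ)} {x z y : Cfg n}
    (h1 : Reach L1 x z) (h2 : Reach L2 z y) : Reach (L1 ++ L2) x y := by
  induction L1 generalizing x with
  | nil => rw [show x = z from h1]; exact h2
  | cons M L ih =>
    obtain ⟨w, hw1, hw2⟩ := h1
    exact ⟨w, hw1, ih hw2⟩

lemma reach_chain (L : List (Matrix (Cfg n) (Cfg n) ℂ)) (z : ℕ → Cfg n)
    (h : ∀ k (hk : k < L.length), 0 < L[k] (z k) (z (k+1))) :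
    Reach L (z 0) (z L.length) := by
  induction L generalizing z with
  | nil => rfl
  | cons M L ih =>
    refine ⟨z 1, h 0 (by simp), ?_⟩
    have := ih (fun t => z (t+1)) (fun k hk => h (k+1) (by simpa using Nat.succ_lt_succ hk))
    simpa using this

lemma reach_flatten_chain (ls : List (List (Matrix (Cfg n) (Cfg n) ℂ))) (z : ℕ → Cfg n)
    (h : ∀ k (hk : k < ls.length), Reach ls[k] (z k) (z (k+1))) :
    Reach ls.flatten (z 0) (z ls.length) := by
  induction ls generalizing z with
  | nil => rfl
  | cons l ls ih =>
    rw [List.flatten_cons]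
    apply reach_append (h 0 (by simp))
    have := ih (fun t => z (t+1)) (fun k hk => h (k+1) (by simpa using Nat.succ_lt_succ hk))
    simpa using this

end Aux3
section Aux4
open Matrix

lemma sum_indicator_lt (I s : ℕ) (hs : s ≤ I) :
    (∑ j : Fin I, (((if (j:ℕ) < s then 1 else 0 : Fin 2)) : ℕ)) = s := by
  calc (∑ j : Fin I, (((if (j:ℕ) < s then 1 else 0 : Fin 2)) : ℕ))
      = ∑ j : Fin I, (if (j:ℕ) < s then (1:ℕ) else 0) := by
        apply Finset.sum_congr rfl; intro j _; split_ifs <;> simp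
    _ = ∑ t ∈ Finset.range I, (if t < s then (1:ℕ) else 0) :=
        Fin.sum_univ_eq_sum_range (fun t => if t < s then (1:ℕ) else 0) I
    _ = s := by
        rw [Finset.sum_boole]
        have : Finset.filter (fun t => t < s) (Finset.range I) = Finset.range s := by
          ext t; simp; omega
        rw [this]; simp

lemma sum_indicator_mem (I s e : ℕ) (he : e ≤ I) :
    (∑ j : Fin I, (((if s ≤ (j:ℕ) ∧ (j:ℕ) < e then 1 else 0 : Fin 2)) : ℕ)) = e - s := by
  calc (∑ j : Fin I, (((if s ≤ (j:ℕ) ∧ (j:ℕ) < e then 1 else 0 : Fin 2)) : ℕ))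
      = ∑ j : Fin I, (if s ≤ (j:ℕ) ∧ (j:ℕ) < e then (1:ℕ) else 0) := by
        apply Finset.sum_congr rfl; intro j _; split_ifs <;> simp
    _ = ∑ t ∈ Finset.range I, (if s ≤ t ∧ t < e then (1:ℕ) else 0) :=
        Fin.sum_univ_eq_sum_range (fun t => if s ≤ t ∧ t < e then (1:ℕ) else 0) I
    _ = e - s := by
        rw [Finset.sum_boole]
        have : Finset.filter (fun t => s ≤ t ∧ t < e) (Finset.range I) = Finset.Ico s e := by
          ext t; simp; omega
        rw [this]; simp

/-- splitting a configuration on `2I` sites into its two halves -/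
def halvesEquiv (I : ℕ) : Cfg (2*I) ≃ Cfg I × Cfg I where
  toFun x := (firstHalf x, secondHalf x)
  invFun p k := if h : (k:ℕ) < I then p.1 ⟨k, h⟩ else p.2 ⟨(k:ℕ) - I, by have := k.isLt; omega⟩
  left_inv x := by
    funext k
    by_cases h : (k:ℕ) < I
    · simp only [dif_pos h, firstHalf]
    · simp only [dif_neg h, secondHalf]
      congr 1
      apply Fin.ext
      simp
      omega
  right_inv p := by
    ext j
    · simp only [firstHalf]
      have h : ((⟨(j:ℕ), by have := j.isLt; omega⟩ : Fin (2*I)) : ℕ) < I := j.isLt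
      simp only [dif_pos h]
    · simp only [secondHalf]
      have h : ¬ ((⟨(j:ℕ) + I, by have := j.isLt; omega⟩ : Fin (2*I)) : ℕ) < I := by simp
      simp only [dif_neg h]
      congr 1
      apply Fin.ext
      simp

lemma sum_halves (I : ℕ) (f g : Cfg I → ℂ) :
    (∑ x : Cfg (2*I), f (firstHalf x) * g (secondHalf x)) =
      (∑ x1 : Cfg I, f x1) * (∑ x2 : Cfg I, g x2) := by
  rw [← Equiv.sum_comp (halvesEquiv I).symm (fun x => f (firstHalf x) * g (secondHalf x))]
  have : ∀ p : Cfg I × Cfg I,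
      f (firstHalf ((halvesEquiv I).symm p)) * g (secondHalf ((halvesEquiv I).symm p))
        = f p.1 * g p.2 := by
    intro p
    have := (halvesEquiv I).right_inv p
    have h1 : firstHalf ((halvesEquiv I).symm p) = p.1 := congrArg Prod.fst this
    have h2 : secondHalf ((halvesEquiv I).symm p) = p.2 := congrArg Prod.snd this
    rw [h1, h2]
  rw [Finset.sum_congr rfl (fun p _ => this p), Finset.sum_mul_sum]
  rw [Fintype.sum_prod_type]

lemma tot_eq_halves (I : ℕ) (x : Cfg (2*I)) :
    tot x = tot (firstHalf x) + tot (secondHalf x) := by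
  have h2 : I + I = 2*I := by omega
  unfold tot
  rw [← Equiv.sum_comp (finCongr h2) (fun k => ((x k : ℕ))), Fin.sum_univ_add]
  congr 1
  · exact Finset.sum_congr rfl fun j _ => by
      show ((x ((finCongr h2) (Fin.natAdd I j)) : ℕ)) = ((secondHalf x j : ℕ))
      have : (finCongr h2) (Fin.natAdd I j)
          = (⟨(j:ℕ) + I, by have := j.isLt; omega⟩ : Fin (2*I)) := by
        apply Fin.ext; try simp; try omega
      rw [this]; try rfl

end Aux4
section Aux5
open Matrix

lemma tot_le (I : ℕ) (x : Cfg I) : (∑ j, ((x j : ℕ))) ≤ I :=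
  le_trans (Finset.sum_le_sum (fun j _ => Nat.lt_succ_iff.mp (x j).isLt)) (by simp)

lemma Zq_real (I : ℕ) (q : ℝ) (m : ℕ) :
    Zq I (q:ℂ) m = ((∑ x ∈ Finset.univ.filter
      (fun x : Fin I → Fin 2 => (∑ j, ((x j : ℕ))) = m), q ^ invCount x : ℝ) : ℂ) := by
  unfold Zq; push_cast; rfl

lemma Zq_real_pos (I : ℕ) {q : ℝ} (hq0 : 0 < q) (m : ℕ) (hm : m ≤ I) :
    0 < (∑ x ∈ Finset.univ.filter
      (fun x : Fin I → Fin 2 => (∑ j, ((x j : ℕ))) = m), q ^ invCount x : ℝ) := by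
  apply Finset.sum_pos (fun x _ => pow_pos hq0 _)
  refine ⟨fun j => if (j:ℕ) < m then 1 else 0, ?_⟩
  simp only [Finset.mem_filter, Finset.mem_univ, true_and]
  exact sum_indicator_lt I m hm

lemma Zq_ne_zero (I : ℕ) {q : ℝ} (hq0 : 0 < q) (m : ℕ) (hm : m ≤ I) :
    Zq I (q:ℂ) m ≠ 0 := by
  rw [Zq_real]
  exact_mod_cast (Zq_real_pos I hq0 m hm).ne'

lemma hatPiMat_nonneg (I : ℕ) {q : ℝ} (hq0 : 0 < q) (x : Cfg I) (m : Fin (I+1)) :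
    0 ≤ hatPiMat I (q:ℂ) x m := by
  unfold hatPiMat
  split_ifs
  · rw [Zq_real]
    have : ((q:ℂ)) ^ invCount x = ((q ^ invCount x : ℝ) : ℂ) := by push_cast; ring
    rw [this, ← Complex.ofReal_div]
    have : 0 ≤ q ^ invCount x / (∑ x ∈ Finset.univ.filter
        (fun x : Fin I → Fin 2 => (∑ j, ((x j : ℕ))) = (m:ℕ)), q ^ invCount x : ℝ) :=
      div_nonneg (pow_pos hq0 _).le (Zq_real_pos I hq0 (m:ℕ) (Nat.lt_succ_iff.mp m.isLt)).le
    exact_mod_cast this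
  · exact le_refl 0

lemma hatPiMat_pos (I : ℕ) {q : ℝ} (hq0 : 0 < q) (x : Cfg I) (m : Fin (I+1))
    (h : (∑ j, ((x j : ℕ))) = (m:ℕ)) : 0 < hatPiMat I (q:ℂ) x m := by
  unfold hatPiMat
  rw [if_pos h, Zq_real]
  have e1 : ((q:ℂ)) ^ invCount x = ((q ^ invCount x : ℝ) : ℂ) := by push_cast; ring
  rw [e1, ← Complex.ofReal_div]
  have : 0 < q ^ invCount x / (∑ x ∈ Finset.univ.filter
      (fun x : Fin I → Fin 2 => (∑ j, ((x j : ℕ))) = (m:ℕ)), q ^ invCount x : ℝ) :=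
    div_pos (pow_pos hq0 _) (Zq_real_pos I hq0 (m:ℕ) (Nat.lt_succ_iff.mp m.isLt))
  exact_mod_cast this

lemma hatPiMat_supp (I : ℕ) (q : ℂ) (x : Cfg I) (m : Fin (I+1))
    (h : hatPiMat I q x m ≠ 0) : (∑ j, ((x j : ℕ))) = (m:ℕ) := by
  unfold hatPiMat at h
  split_ifs at h with hc
  · exact hc
  · exact absurd rfl h

lemma PiMat_supp (I : ℕ) (x : Cfg I) (m : Fin (I+1))
    (h : PiMat I m x ≠ 0) : (∑ j, ((x j : ℕ))) = (m:ℕ) := by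
  unfold PiMat at h
  split_ifs at h with hc
  · exact hc
  · exact absurd rfl h

lemma PiMat_nonneg (I : ℕ) (x : Cfg I) (m : Fin (I+1)) : 0 ≤ PiMat I m x := by
  unfold PiMat; split_ifs
  · exact zero_le_one
  · exact le_refl 0

lemma hatPiMat_colsum (I : ℕ) {q : ℝ} (hq0 : 0 < q) (m : Fin (I+1)) :
    ∑ x : Cfg I, hatPiMat I (q:ℂ) x m = 1 := by
  unfold hatPiMat
  rw [Finset.sum_ite, Finset.sum_const_zero, add_zero, ← Finset.sum_div]
  have : (∑ x ∈ Finset.univ.filter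
      (fun x : Fin I → Fin 2 => (∑ j, ((x j : ℕ))) = (m:ℕ)), (q:ℂ) ^ invCount x)
      = Zq I (q:ℂ) (m:ℕ) := rfl
  rw [this, div_self (Zq_ne_zero I hq0 (m:ℕ) (Nat.lt_succ_iff.mp m.isLt))]

lemma PiMat_colsum (I : ℕ) (x : Cfg I) : ∑ m : Fin (I+1), PiMat I m x = 1 := by
  unfold PiMat
  have hx : (∑ j, ((x j : ℕ))) ≤ I := tot_le I x
  have key : ∀ m : Fin (I+1), (if (∑ j, ((x j : ℕ))) = (m:ℕ) then (1:ℂ) else 0)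
      = if m = ⟨∑ j, ((x j : ℕ)), Nat.lt_succ_of_le hx⟩ then 1 else 0 := by
    intro m
    have : ((∑ j, ((x j : ℕ))) = (m:ℕ)) ↔ (m = ⟨∑ j, ((x j : ℕ)), Nat.lt_succ_of_le hx⟩) := by
      rw [Fin.ext_iff]; simp [eq_comm]
    simp only [this]
  rw [Finset.sum_congr rfl (fun m _ => key m)]
  simp

/-- the list of bulk factors, so that `Rring = (Gmats I q u).flatten.prod` -/
noncomputable def Gmats (I : ℕ) (q u : ℂ) : List (List (Matrix (Cfg (2*I)) (Cfg (2*I)) ℂ)) :=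
  (List.finRange I).map (fun a' =>
    (List.finRange I).map (fun b' =>
      emb2 (⟨b'.1, by have := b'.isLt; omega⟩ : Fin (2 * I))
        ⟨2 * I - 1 - a'.1, by have := a'.isLt; omega⟩
        (Rmat q (u * q ^ (((b'.1 : ℤ) + 1) - ((I : ℤ) - (a'.1 : ℤ)))))))

lemma Rring_eq (I : ℕ) (q u : ℂ) : Rring I q u = (Gmats I q u).flatten.prod := by
  unfold Rring Gmats
  rw [List.prod_flatten, List.map_map]
  rfl

lemma uval {q κ : ℝ} (hq0 : 0 < q) (hq1 : q < 1) (hκ0 : 0 < κ) {I : ℕ} (hI : 1 ≤ I)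
    (hκ1 : κ < q ^ (((I:ℝ)-1)/2)) (e : ℤ) (he : 1 - (I:ℤ) ≤ e) :
    ∃ ur : ℝ, 0 < ur ∧ ur < 1 ∧ (κ:ℂ)^2 * (q:ℂ)^e = (ur:ℂ) := by
  refine ⟨κ^2 * q^e, by positivity, ?_, by push_cast; ring⟩
  have h1 : κ^2 < (q ^ (((I:ℝ)-1)/2))^2 := by
    apply pow_lt_pow_left₀ hκ1 hκ0.le
    norm_num
  have h2 : (q ^ (((I:ℝ)-1)/2))^2 = q ^ ((((I:ℤ)-1) : ℤ) : ℝ) := by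
    rw [← Real.rpow_natCast (q ^ (((I:ℝ)-1)/2)) 2, ← Real.rpow_mul hq0.le]
    congr 1
    push_cast
    ring
  have h3 : q ^ ((((I:ℤ)-1) : ℤ) : ℝ) = q ^ (((I:ℤ)-1) : ℤ) := Real.rpow_intCast q _
  have h4 : κ^2 * q^e < q ^ (((I:ℤ)-1) : ℤ) * q^e := by
    apply mul_lt_mul_of_pos_right _ (zpow_pos hq0 e)
    rw [← h3, ← h2]; exact h1
  have h5 : q ^ (((I:ℤ)-1) : ℤ) * q^e = q ^ ((I:ℤ) - 1 + e) := (zpow_add₀ hq0.ne' _ _).symm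
  have h6 : q ^ ((I:ℤ) - 1 + e) ≤ 1 := by
    have hnn : (0:ℤ) ≤ (I:ℤ) - 1 + e := by omega
    rw [show (I:ℤ) - 1 + e = (((I:ℤ) - 1 + e).toNat : ℤ) by omega, zpow_natCast]
    exact pow_le_one₀ hq0.le hq1.le
  calc κ^2 * q^e < q ^ (((I:ℤ)-1) : ℤ) * q^e := h4
    _ = q ^ ((I:ℤ) - 1 + e) := h5
    _ ≤ 1 := h6

lemma good_emb2 {n : ℕ} (i j : Fin n) (hij : i ≠ j) {qr ur : ℝ}
    (hq0 : 0 < qr) (hq1 : qr < 1) (hu0 : 0 < ur) (hu1 : ur < 1) :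
    Good (emb2 i j (Rmat (qr:ℂ) (ur:ℂ))) := by
  have hqu : (0:ℝ) < 1 - qr * ur := by nlinarith
  refine ⟨emb2_nonneg i j _ (fun p r => Rent_nonneg hq0 hq1 hu0 hu1 _ _ _ _),
    emb2_conserve i j hij _ ?_, emb2_colsum i j hij _ ?_⟩
  · intro p r h
    by_contra hne
    exact h (Rent_conserve _ _ _ _ (fun hh => hne hh.symm))
  · intro p
    rw [Fintype.sum_prod_type]
    apply Rent_colsum
    have : ((1:ℂ) - (qr:ℂ) * (ur:ℂ)) = ((1 - qr*ur : ℝ) : ℂ) := by push_cast; ring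
    rw [this]
    exact_mod_cast hqu.ne'

lemma good_Gmats {q κ : ℝ} (hq0 : 0 < q) (hq1 : q < 1) (hκ0 : 0 < κ) {I : ℕ} (hI : 1 ≤ I)
    (hκ1 : κ < q ^ (((I:ℝ)-1)/2)) :
    ∀ M ∈ (Gmats I (q:ℂ) ((κ:ℂ)^2)).flatten, Good M := by
  intro M hM
  rw [List.mem_flatten] at hM
  obtain ⟨l, hl, hMl⟩ := hM
  unfold Gmats at hl
  rw [List.mem_map] at hl
  obtain ⟨a', -, rfl⟩ := hl
  rw [List.mem_map] at hMl
  obtain ⟨b', -, rfl⟩ := hMl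
  obtain ⟨ur, hu0, hu1, hu⟩ := uval hq0 hq1 hκ0 hI hκ1
    (((b'.1 : ℤ) + 1) - ((I : ℤ) - (a'.1 : ℤ)))
    (by have := b'.isLt; have := a'.isLt; omega)
  rw [hu]
  apply good_emb2 _ _ _ hq0 hq1 hu0 hu1
  have h1 := a'.isLt
  have h2 := b'.isLt
  exact Fin.ne_of_val_ne (by simp; omega)

end Aux5
section Aux6
open Matrix
variable {n : ℕ}

lemma reach_chain' (L : List (Matrix (Cfg n) (Cfg n) ℂ)) (z : ℕ → Cfg n) (x y : Cfg n)
    (hx : z 0 = x) (hy : z L.length = y)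
    (h : ∀ k (hk : k < L.length), 0 < L[k] (z k) (z (k+1))) : Reach L x y :=
  hx ▸ hy ▸ reach_chain L z h

lemma reach_flatten_chain' (ls : List (List (Matrix (Cfg n) (Cfg n) ℂ))) (z : ℕ → Cfg n)
    (x y : Cfg n) (hx : z 0 = x) (hy : z ls.length = y)
    (h : ∀ k (hk : k < ls.length), Reach ls[k] (z k) (z (k+1))) : Reach ls.flatten x y :=
  hx ▸ hy ▸ reach_flatten_chain ls z h

lemma reach_phases {I : ℕ} (G : Fin I → Fin I → Matrix (Cfg (2*I)) (Cfg (2*I)) ℂ)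
    (hkeep : ∀ (a' b' : Fin I) (w : Cfg (2*I)), 0 < G a' b' w w)
    (m off : ℕ) (hoff : off + m ≤ I) (cfg : ℕ → Cfg (2*I)) (p : ℕ → ℕ)
    (hp : ∀ t, t < m → p t < I)
    (hswap : ∀ t (ht : t < m),
      0 < G ⟨I - 1 - (off + t), by omega⟩ ⟨p t, hp t ht⟩ (cfg (t+1)) (cfg t)) :
    Reach ((List.finRange I).map (fun a' => (List.finRange I).map (fun b' => G a' b'))).flatten
      (cfg m) (cfg 0) := by
  apply reach_flatten_chain' _ (fun k => cfg (min m (I - k - off))) _ _ ?_ ?_ ?_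
  · show cfg (min m (I - 0 - off)) = cfg m
    exact congrArg cfg (by omega)
  · show cfg (min m (I - ((List.finRange I).map
        (fun a' => (List.finRange I).map (fun b' => G a' b'))).length - off)) = cfg 0
    exact congrArg cfg (by simp only [List.length_map, List.length_finRange]; omega)
  · intro k hk
    have hkI : k < I := by simpa using hk
    show Reach _ (cfg (min m (I - k - off))) (cfg (min m (I - (k+1) - off)))
    simp only [List.getElem_map, List.getElem_finRange, Fin.cast_mk]
    by_cases hact : off ≤ I - 1 - k ∧ I - 1 - k < off + m
    · -- swap phase
      obtain ⟨hact1, hact2⟩ := hact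
      set t := I - 1 - k - off with ht
      have htm : t < m := by omega
      have hmin1 : min m (I - k - off) = t + 1 := by omega
      have hmin2 : min m (I - (k+1) - off) = t := by omega
      rw [hmin1, hmin2]
      apply reach_chain' _ (fun s => if s ≤ p t then cfg (t+1) else cfg t) _ _ ?_ ?_ ?_
      · show (if 0 ≤ p t then cfg (t+1) else cfg t) = cfg (t+1)
        exact if_pos (Nat.zero_le _)
      · show (if _ ≤ p t then cfg (t+1) else cfg t) = cfg t
        rw [if_neg]
        simp only [List.length_map, List.length_finRange]
        have := hp t htm; omega
      · intro s hs
        have hsI : s < I := by simpa using hs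
        simp only [List.getElem_map, List.getElem_finRange, Fin.cast_mk]
        rcases lt_trichotomy s (p t) with hlt | heq | hgt
        · rw [if_pos hlt.le, if_pos (by omega : s + 1 ≤ p t)]
          exact hkeep _ _ _
        · rw [if_pos heq.le, if_neg (by omega : ¬ s + 1 ≤ p t)]
          have hsw := hswap t htm
          have efin1 : (⟨I - 1 - (off + t), by omega⟩ : Fin I) = ⟨k, hkI⟩ := by
            apply Fin.ext; show I - 1 - (off + t) = k; omega
          have efin2 : (⟨p t, hp t htm⟩ : Fin I) = ⟨s, hsI⟩ := by
            apply Fin.ext; show p t = s; omega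
          rw [efin1, efin2] at hsw
          exact hsw
        · rw [if_neg (by omega : ¬ s ≤ p t), if_neg (by omega : ¬ s + 1 ≤ p t)]
          exact hkeep _ _ _
    · -- keep phase
      have hmin : min m (I - k - off) = min m (I - (k+1) - off) := by omega
      rw [hmin]
      apply reach_chain' _ (fun _ => cfg (min m (I - (k+1) - off))) _ _ rfl rfl ?_
      intro s hs
      have hsI : s < I := by simpa using hs
      simp only [List.getElem_map, List.getElem_finRange, Fin.cast_mk]
      exact hkeep _ _ _

end Aux6
section Aux7
open Matrix

/-- configurations for the case `b ≤ d` -/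
def cfgA (I a b : ℕ) (t : ℕ) : Cfg (2*I) := fun k =>
  if (k:ℕ) < I then (if (k:ℕ) < b + t then 1 else 0)
  else (if t ≤ (k:ℕ) - I ∧ (k:ℕ) - I < a then 1 else 0)

/-- configurations for the case `d < b` -/
def cfgB (I a b : ℕ) (t : ℕ) : Cfg (2*I) := fun k =>
  if (k:ℕ) < I then (if t ≤ (k:ℕ) ∧ (k:ℕ) < b then 1 else 0)
  else (if (k:ℕ) - I < a + t then 1 else 0)

def siteA {I : ℕ} (b' : Fin I) : Fin (2*I) := ⟨b'.1, by have := b'.isLt; omega⟩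
def siteB {I : ℕ} (a' : Fin I) : Fin (2*I) := ⟨2*I - 1 - a'.1, by have := a'.isLt; omega⟩

lemma cfgA_first_sum (I a b t : ℕ) (h : b + t ≤ I) :
    (∑ j, ((firstHalf (cfgA I a b t) j : ℕ))) = b + t := by
  have hpt : ∀ j : Fin I, firstHalf (cfgA I a b t) j = if (j:ℕ) < b + t then 1 else 0 := by
    intro j
    show (if (j:ℕ) < I then (if (j:ℕ) < b + t then (1:Fin 2) else 0) else _) = _
    rw [if_pos j.isLt]
  rw [Finset.sum_congr rfl (fun j _ => by rw [hpt j])]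
  exact sum_indicator_lt I (b+t) h

lemma cfgA_second_sum (I a b t : ℕ) (ha : a ≤ I) :
    (∑ j, ((secondHalf (cfgA I a b t) j : ℕ))) = a - t := by
  have hpt : ∀ j : Fin I, secondHalf (cfgA I a b t) j
      = if t ≤ (j:ℕ) ∧ (j:ℕ) < a then 1 else 0 := by
    intro j
    show (if (j:ℕ) + I < I then (if (j:ℕ) + I < b + t then (1:Fin 2) else 0)
      else (if t ≤ (j:ℕ) + I - I ∧ (j:ℕ) + I - I < a then 1 else 0)) = _
    rw [if_neg (by omega)]
    have e : (j:ℕ) + I - I = (j:ℕ) := by omega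
    rw [e]
  rw [Finset.sum_congr rfl (fun j _ => by rw [hpt j])]
  exact sum_indicator_mem I t a ha

lemma cfgB_first_sum (I a b t : ℕ) (hb : b ≤ I) :
    (∑ j, ((firstHalf (cfgB I a b t) j : ℕ))) = b - t := by
  have hpt : ∀ j : Fin I, firstHalf (cfgB I a b t) j
      = if t ≤ (j:ℕ) ∧ (j:ℕ) < b then 1 else 0 := by
    intro j
    show (if (j:ℕ) < I then (if t ≤ (j:ℕ) ∧ (j:ℕ) < b then (1:Fin 2) else 0) else _) = _
    rw [if_pos j.isLt]
  rw [Finset.sum_congr rfl (fun j _ => by rw [hpt j])]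
  exact sum_indicator_mem I t b hb

lemma cfgB_second_sum (I a b t : ℕ) (h : a + t ≤ I) :
    (∑ j, ((secondHalf (cfgB I a b t) j : ℕ))) = a + t := by
  have hpt : ∀ j : Fin I, secondHalf (cfgB I a b t) j
      = if (j:ℕ) < a + t then 1 else 0 := by
    intro j
    show (if (j:ℕ) + I < I then (if t ≤ (j:ℕ) + I ∧ (j:ℕ) + I < b then (1:Fin 2) else 0)
      else (if (j:ℕ) + I - I < a + t then 1 else 0)) = _
    rw [if_neg (by omega)]
    have e : (j:ℕ) + I - I = (j:ℕ) := by omega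
    rw [e]
  rw [Finset.sum_congr rfl (fun j _ => by rw [hpt j])]
  exact sum_indicator_lt I (a+t) h

variable {q κ : ℝ} {I : ℕ}

lemma emb2_bulk_keep (hq0 : 0 < q) (hq1 : q < 1) (hκ0 : 0 < κ) (hI : 1 ≤ I)
    (hκ1 : κ < q ^ (((I:ℝ)-1)/2)) (a' b' : Fin I) (w : Cfg (2*I)) :
    0 < emb2 (siteA b') (siteB a')
      (Rmat (q:ℂ) ((κ:ℂ)^2 * (q:ℂ) ^ (((b'.1 : ℤ) + 1) - ((I : ℤ) - (a'.1 : ℤ))))) w w := by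
  obtain ⟨ur, h0, h1, hu⟩ := uval hq0 hq1 hκ0 hI hκ1
    (((b'.1 : ℤ) + 1) - ((I : ℤ) - (a'.1 : ℤ)))
    (by have := a'.isLt; have := b'.isLt; omega)
  rw [hu]
  exact emb2_keep_pos hq0 hq1 h0 h1 _ _ _

lemma emb2_bulk_swap (hq0 : 0 < q) (hq1 : q < 1) (hκ0 : 0 < κ) (hI : 1 ≤ I)
    (hκ1 : κ < q ^ (((I:ℝ)-1)/2)) (a' b' : Fin I) (w w' : Cfg (2*I))
    (h1 : w' (siteA b') = w (siteB a')) (h2 : w' (siteB a') = w (siteA b'))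
    (h3 : w (siteA b') ≠ w (siteB a'))
    (h4 : ∀ k, k ≠ siteA b' → k ≠ siteB a' → w' k = w k) :
    0 < emb2 (siteA b') (siteB a')
      (Rmat (q:ℂ) ((κ:ℂ)^2 * (q:ℂ) ^ (((b'.1 : ℤ) + 1) - ((I : ℤ) - (a'.1 : ℤ))))) w' w := by
  obtain ⟨ur, hu0, hu1, hu⟩ := uval hq0 hq1 hκ0 hI hκ1
    (((b'.1 : ℤ) + 1) - ((I : ℤ) - (a'.1 : ℤ)))
    (by have := a'.isLt; have := b'.isLt; omega)
  rw [hu]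
  exact emb2_swap_pos hq0 hq1 hu0 hu1 _ _ _ _ h1 h2 h3 h4

lemma reach_Gmats (hq0 : 0 < q) (hq1 : q < 1) (hκ0 : 0 < κ) (hI : 1 ≤ I)
    (hκ1 : κ < q ^ (((I:ℝ)-1)/2)) (a b c d : ℕ)
    (ha : a ≤ I) (hb : b ≤ I) (hc : c ≤ I) (hd : d ≤ I) (hsum : a + b = c + d) :
    ∃ x y : Cfg (2*I),
      (∑ j, ((firstHalf x j : ℕ))) = d ∧ (∑ j, ((secondHalf x j : ℕ))) = c ∧
      (∑ j, ((firstHalf y j : ℕ))) = b ∧ (∑ j, ((secondHalf y j : ℕ))) = a ∧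
      0 < Rring I (q:ℂ) ((κ:ℂ)^2) x y := by
  by_cases hdb : b ≤ d
  · -- case 1 : particles move from the second block into the first
    set m := d - b with hm
    have hma : m ≤ a := by omega
    have hbm : b + m = d := by omega
    have hamc : a - m = c := by omega
    refine ⟨cfgA I a b m, cfgA I a b 0, ?_, ?_, ?_, ?_, ?_⟩
    · rw [cfgA_first_sum I a b m (by omega)]; omega
    · rw [cfgA_second_sum I a b m ha]; omega
    · rw [cfgA_first_sum I a b 0 (by omega)]; omega
    · rw [cfgA_second_sum I a b 0 ha]; omega
    · rw [Rring_eq]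
      apply reach_pos (good_Gmats hq0 hq1 hκ0 hI hκ1)
      have key := reach_phases
        (fun a' b' => emb2 (siteA b') (siteB a')
          (Rmat (q:ℂ) ((κ:ℂ)^2 * (q:ℂ) ^ (((b'.1 : ℤ) + 1) - ((I : ℤ) - (a'.1 : ℤ))))))
        (fun a' b' w => emb2_bulk_keep hq0 hq1 hκ0 hI hκ1 a' b' w)
        m 0 (by omega) (fun t => cfgA I a b t) (fun t => b + t)
        (fun t ht => show b + t < I by omega) ?_
      · exact key
      · intro t ht
        have htI : t < I := by omega
        have hbtI : b + t < I := by omega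
        apply emb2_bulk_swap hq0 hq1 hκ0 hI hκ1
        · -- w' i = w j
          show (if b + t < I then (if b + t < b + (t+1) then (1:Fin 2) else 0)
              else (if t+1 ≤ b + t - I ∧ b + t - I < a then 1 else 0))
            = (if 2*I - 1 - (I - 1 - (0 + t)) < I
                then (if 2*I - 1 - (I - 1 - (0 + t)) < b + t then 1 else 0)
              else (if t ≤ 2*I - 1 - (I - 1 - (0 + t)) - I
                    ∧ 2*I - 1 - (I - 1 - (0 + t)) - I < a then 1 else 0))
          rw [if_pos (by omega : b + t < I), if_pos (by omega : b + t < b + (t+1)),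
            if_neg (by omega : ¬ 2*I - 1 - (I - 1 - (0 + t)) < I),
            if_pos (by omega : t ≤ 2*I - 1 - (I - 1 - (0 + t)) - I
              ∧ 2*I - 1 - (I - 1 - (0 + t)) - I < a)]
        · -- w' j = w i
          show (if 2*I - 1 - (I - 1 - (0 + t)) < I
                then (if 2*I - 1 - (I - 1 - (0 + t)) < b + (t+1) then (1:Fin 2) else 0)
              else (if t + 1 ≤ 2*I - 1 - (I - 1 - (0 + t)) - I
                    ∧ 2*I - 1 - (I - 1 - (0 + t)) - I < a then 1 else 0))
            = (if b + t < I then (if b + t < b + t then 1 else 0)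
              else (if t ≤ b + t - I ∧ b + t - I < a then 1 else 0))
          rw [if_neg (by omega : ¬ 2*I - 1 - (I - 1 - (0 + t)) < I),
            if_neg (by omega : ¬ (t + 1 ≤ 2*I - 1 - (I - 1 - (0 + t)) - I
              ∧ 2*I - 1 - (I - 1 - (0 + t)) - I < a)),
            if_pos (by omega : b + t < I), if_neg (by omega : ¬ b + t < b + t)]
        · -- w i ≠ w j
          show (if b + t < I then (if b + t < b + t then (1:Fin 2) else 0)
              else (if t ≤ b + t - I ∧ b + t - I < a then 1 else 0))
            ≠ (if 2*I - 1 - (I - 1 - (0 + t)) < I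
                then (if 2*I - 1 - (I - 1 - (0 + t)) < b + t then 1 else 0)
              else (if t ≤ 2*I - 1 - (I - 1 - (0 + t)) - I
                    ∧ 2*I - 1 - (I - 1 - (0 + t)) - I < a then 1 else 0))
          rw [if_pos (by omega : b + t < I), if_neg (by omega : ¬ b + t < b + t),
            if_neg (by omega : ¬ 2*I - 1 - (I - 1 - (0 + t)) < I),
            if_pos (by omega : t ≤ 2*I - 1 - (I - 1 - (0 + t)) - I
              ∧ 2*I - 1 - (I - 1 - (0 + t)) - I < a)]
          decide
        · -- off sites
          intro k hki hkj
          have hki' : (k:ℕ) ≠ b + t := fun h => hki (Fin.ext h)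
          have hkj' : (k:ℕ) ≠ 2*I - 1 - (I - 1 - (0 + t)) := fun h => hkj (Fin.ext h)
          show (if (k:ℕ) < I then (if (k:ℕ) < b + (t+1) then (1:Fin 2) else 0)
              else (if t + 1 ≤ (k:ℕ) - I ∧ (k:ℕ) - I < a then 1 else 0))
            = (if (k:ℕ) < I then (if (k:ℕ) < b + t then 1 else 0)
              else (if t ≤ (k:ℕ) - I ∧ (k:ℕ) - I < a then 1 else 0))
          have hk2I := k.isLt
          split_ifs <;> first | rfl | (exfalso; omega)
  · -- case 2 : particles move from the first block into the second
    push_neg at hdb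
    set m := b - d with hm
    have hmb : m ≤ b := by omega
    have hamc : a + m = c := by omega
    refine ⟨cfgB I a b m, cfgB I a b 0, ?_, ?_, ?_, ?_, ?_⟩
    · rw [cfgB_first_sum I a b m hb]; omega
    · rw [cfgB_second_sum I a b m (by omega)]; omega
    · rw [cfgB_first_sum I a b 0 hb]; omega
    · rw [cfgB_second_sum I a b 0 (by omega)]; omega
    · rw [Rring_eq]
      apply reach_pos (good_Gmats hq0 hq1 hκ0 hI hκ1)
      have key := reach_phases
        (fun a' b' => emb2 (siteA b') (siteB a')
          (Rmat (q:ℂ) ((κ:ℂ)^2 * (q:ℂ) ^ (((b'.1 : ℤ) + 1) - ((I : ℤ) - (a'.1 : ℤ))))))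
        (fun a' b' w => emb2_bulk_keep hq0 hq1 hκ0 hI hκ1 a' b' w)
        m a (by omega) (fun t => cfgB I a b t) (fun t => t)
        (fun t ht => show t < I by omega) ?_
      · exact key
      · intro t ht
        have htI : t < I := by omega
        have hatI : a + t < I := by omega
        apply emb2_bulk_swap hq0 hq1 hκ0 hI hκ1
        · -- w' i = w j
          show (if t < I then (if t + 1 ≤ t ∧ t < b then (1:Fin 2) else 0)
              else (if t - I < a + (t+1) then 1 else 0))
            = (if 2*I - 1 - (I - 1 - (a + t)) < I
                then (if t ≤ 2*I - 1 - (I - 1 - (a + t)) ∧ 2*I - 1 - (I - 1 - (a + t)) < b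
                      then 1 else 0)
              else (if 2*I - 1 - (I - 1 - (a + t)) - I < a + t then 1 else 0))
          rw [if_pos (by omega : t < I), if_neg (by omega : ¬ (t + 1 ≤ t ∧ t < b)),
            if_neg (by omega : ¬ 2*I - 1 - (I - 1 - (a + t)) < I),
            if_neg (by omega : ¬ 2*I - 1 - (I - 1 - (a + t)) - I < a + t)]
        · -- w' j = w i
          show (if 2*I - 1 - (I - 1 - (a + t)) < I
                then (if t + 1 ≤ 2*I - 1 - (I - 1 - (a + t))
                      ∧ 2*I - 1 - (I - 1 - (a + t)) < b then (1:Fin 2) else 0)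
              else (if 2*I - 1 - (I - 1 - (a + t)) - I < a + (t+1) then 1 else 0))
            = (if t < I then (if t ≤ t ∧ t < b then 1 else 0)
              else (if t - I < a + t then 1 else 0))
          rw [if_neg (by omega : ¬ 2*I - 1 - (I - 1 - (a + t)) < I),
            if_pos (by omega : 2*I - 1 - (I - 1 - (a + t)) - I < a + (t+1)),
            if_pos (by omega : t < I), if_pos (by omega : t ≤ t ∧ t < b)]
        · -- w i ≠ w j
          show (if t < I then (if t ≤ t ∧ t < b then (1:Fin 2) else 0)
              else (if t - I < a + t then 1 else 0))
            ≠ (if 2*I - 1 - (I - 1 - (a + t)) < I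
                then (if t ≤ 2*I - 1 - (I - 1 - (a + t)) ∧ 2*I - 1 - (I - 1 - (a + t)) < b
                      then 1 else 0)
              else (if 2*I - 1 - (I - 1 - (a + t)) - I < a + t then 1 else 0))
          rw [if_pos (by omega : t < I), if_pos (by omega : t ≤ t ∧ t < b),
            if_neg (by omega : ¬ 2*I - 1 - (I - 1 - (a + t)) < I),
            if_neg (by omega : ¬ 2*I - 1 - (I - 1 - (a + t)) - I < a + t)]
          decide
        · -- off sites
          intro k hki hkj
          have hki' : (k:ℕ) ≠ t := fun h => hki (Fin.ext h)
          have hkj' : (k:ℕ) ≠ 2*I - 1 - (I - 1 - (a + t)) := fun h => hkj (Fin.ext h)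
          show (if (k:ℕ) < I then (if t + 1 ≤ (k:ℕ) ∧ (k:ℕ) < b then (1:Fin 2) else 0)
              else (if (k:ℕ) - I < a + (t+1) then 1 else 0))
            = (if (k:ℕ) < I then (if t ≤ (k:ℕ) ∧ (k:ℕ) < b then 1 else 0)
              else (if (k:ℕ) - I < a + t then 1 else 0))
          have hk2I := k.isLt
          split_ifs <;> first | rfl | (exfalso; omega)

end Aux7

/-- **Stochasticity, conservation and positivity of the fused bulk vertex weights**
`𝚁_{a,b}^{c,d} := R^I(κ²)_{b,a}^{d,c}` for `0 < q < 1` and `0 < κ < q^{(I−1)/2}`: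
(i) they vanish unless `a + b = c + d`; (ii) they are real and strictly positive when
`a + b = c + d` (positivity in the `ComplexOrder`); (iii) rows sum to one. -/
theorem fused_R_stochastic (I : ℕ) (hI : 1 ≤ I) (q κ : ℝ)
    (hq0 : 0 < q) (hq1 : q < 1) (hκ0 : 0 < κ) (hκ1 : κ < q ^ (((I : ℝ) - 1) / 2)) :
    (∀ a b c d : Fin (I + 1), (a : ℕ) + (b : ℕ) ≠ (c : ℕ) + (d : ℕ) →
      RI I (q : ℂ) ((κ : ℂ) ^ 2) (d, c) (b, a) = 0) ∧
    (∀ a b c d : Fin (I + 1), (a : ℕ) + (b : ℕ) = (c : ℕ) + (d : ℕ) →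
      0 < RI I (q : ℂ) ((κ : ℂ) ^ 2) (d, c) (b, a)) ∧
    (∀ a b : Fin (I + 1),
      ∑ c : Fin (I + 1), ∑ d : Fin (I + 1), RI I (q : ℂ) ((κ : ℂ) ^ 2) (d, c) (b, a) = 1) := by
  have hGood : Good (Rring I (q:ℂ) ((κ:ℂ)^2)) := by
    rw [Rring_eq]; exact good_prod (good_Gmats hq0 hq1 hκ0 hI hκ1)
  have expand : ∀ p r : Fin (I+1) × Fin (I+1), RI I (q:ℂ) ((κ:ℂ)^2) p r
      = ∑ y' : Cfg (2*I), ∑ x' : Cfg (2*I),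
          PiPiMat I p x' * Rring I (q:ℂ) ((κ:ℂ)^2) x' y' * hatPiPiMat I (q:ℂ) y' r := by
    intro p r
    unfold RI
    simp only [Matrix.mul_apply, Finset.sum_mul]
  refine ⟨?_, ?_, ?_⟩
  · -- (i) conservation
    intro a b c d hne
    rw [expand]
    apply Finset.sum_eq_zero; intro y' _
    apply Finset.sum_eq_zero; intro x' _
    by_cases h1 : PiPiMat I (d,c) x' = 0
    · rw [h1, zero_mul, zero_mul]
    by_cases h2 : hatPiPiMat I (q:ℂ) y' (b,a) = 0
    · rw [h2, mul_zero]
    by_cases h3 : Rring I (q:ℂ) ((κ:ℂ)^2) x' y' = 0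
    · rw [h3, mul_zero, zero_mul]
    exfalso
    have hx1 : (∑ j, ((firstHalf x' j : ℕ))) = (d:ℕ) :=
      PiMat_supp I _ d (fun h => h1 (by unfold PiPiMat; rw [show PiMat I (d,c).1 (firstHalf x') = 0 from h, zero_mul]))
    have hx2 : (∑ j, ((secondHalf x' j : ℕ))) = (c:ℕ) :=
      PiMat_supp I _ c (fun h => h1 (by unfold PiPiMat; rw [show PiMat I (d,c).2 (secondHalf x') = 0 from h, mul_zero]))
    have hy1 : (∑ j, ((firstHalf y' j : ℕ))) = (b:ℕ) :=
      hatPiMat_supp I _ _ b (fun h => h2 (by unfold hatPiPiMat; rw [show hatPiMat I (q:ℂ) (firstHalf y') (b,a).1 = 0 from h, zero_mul]))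
    have hy2 : (∑ j, ((secondHalf y' j : ℕ))) = (a:ℕ) :=
      hatPiMat_supp I _ _ a (fun h => h2 (by unfold hatPiPiMat; rw [show hatPiMat I (q:ℂ) (secondHalf y') (b,a).2 = 0 from h, mul_zero]))
    have hcons := hGood.2.1 x' y' h3
    rw [tot_eq_halves, tot_eq_halves] at hcons
    unfold tot at hcons
    rw [hx1, hx2, hy1, hy2] at hcons
    omega
  · -- (ii) positivity
    intro a b c d hsum
    obtain ⟨x, y, hx1, hx2, hy1, hy2, hpos⟩ := reach_Gmats hq0 hq1 hκ0 hI hκ1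
      (a:ℕ) (b:ℕ) (c:ℕ) (d:ℕ) (Nat.lt_succ_iff.mp a.isLt) (Nat.lt_succ_iff.mp b.isLt)
      (Nat.lt_succ_iff.mp c.isLt) (Nat.lt_succ_iff.mp d.isLt) hsum
    rw [expand]
    have hterm_nonneg : ∀ (y' x' : Cfg (2*I)),
        0 ≤ PiPiMat I (d,c) x' * Rring I (q:ℂ) ((κ:ℂ)^2) x' y' * hatPiPiMat I (q:ℂ) y' (b,a) := by
      intro y' x'
      apply mul_nonneg (mul_nonneg _ (hGood.1 x' y'))
      · unfold hatPiPiMat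
        exact mul_nonneg (hatPiMat_nonneg I hq0 _ _) (hatPiMat_nonneg I hq0 _ _)
      · unfold PiPiMat
        exact mul_nonneg (PiMat_nonneg I _ _) (PiMat_nonneg I _ _)
    apply Finset.sum_pos'
    · intro y' _
      exact Finset.sum_nonneg (fun x' _ => hterm_nonneg y' x')
    · refine ⟨y, Finset.mem_univ y, ?_⟩
      apply Finset.sum_pos' (fun x' _ => hterm_nonneg y x')
      refine ⟨x, Finset.mem_univ x, ?_⟩
      apply mul_pos (mul_pos ?_ hpos)
      · unfold hatPiPiMat
        exact mul_pos (hatPiMat_pos I hq0 _ _ hy1) (hatPiMat_pos I hq0 _ _ hy2)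
      · unfold PiPiMat
        have e1 : PiMat I (d,c).1 (firstHalf x) = 1 := by unfold PiMat; rw [if_pos hx1]
        have e2 : PiMat I (d,c).2 (secondHalf x) = 1 := by unfold PiMat; rw [if_pos hx2]
        rw [e1, e2, one_mul]
        exact zero_lt_one
  · -- (iii) stochasticity
    intro a b
    have hcomm : (∑ c : Fin (I+1), ∑ d : Fin (I+1), RI I (q:ℂ) ((κ:ℂ)^2) (d,c) (b,a))
        = ∑ p : Fin (I+1) × Fin (I+1), RI I (q:ℂ) ((κ:ℂ)^2) p (b,a) := by
      rw [Fintype.sum_prod_type]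
      exact Finset.sum_comm
    rw [hcomm]
    have hPiPicol : ∀ x : Cfg (2*I), ∑ p : Fin (I+1) × Fin (I+1), PiPiMat I p x = 1 := by
      intro x
      rw [Fintype.sum_prod_type]
      show (∑ p1 : Fin (I+1), ∑ p2 : Fin (I+1),
        PiMat I p1 (firstHalf x) * PiMat I p2 (secondHalf x)) = 1
      rw [← Finset.sum_mul_sum, PiMat_colsum, PiMat_colsum, one_mul]
    have hhatcol : ∑ x : Cfg (2*I), hatPiPiMat I (q:ℂ) x (b,a) = 1 := by
      unfold hatPiPiMat
      rw [sum_halves I (fun x1 => hatPiMat I (q:ℂ) x1 (b,a).1) (fun x2 => hatPiMat I (q:ℂ) x2 (b,a).2)]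
      rw [hatPiMat_colsum I hq0, hatPiMat_colsum I hq0, one_mul]
    have expand2 : ∀ p : Fin (I+1) × Fin (I+1), RI I (q:ℂ) ((κ:ℂ)^2) p (b,a)
        = ∑ y' : Cfg (2*I), (∑ x' : Cfg (2*I),
            PiPiMat I p x' * Rring I (q:ℂ) ((κ:ℂ)^2) x' y') * hatPiPiMat I (q:ℂ) y' (b,a) := by
      intro p
      unfold RI
      simp only [Matrix.mul_apply]
    rw [Finset.sum_congr rfl (fun p _ => expand2 p), Finset.sum_comm]
    have key : ∀ y' ∈ (Finset.univ : Finset (Cfg (2*I))),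
        (∑ p : Fin (I+1) × Fin (I+1), (∑ x' : Cfg (2*I),
            PiPiMat I p x' * Rring I (q:ℂ) ((κ:ℂ)^2) x' y') * hatPiPiMat I (q:ℂ) y' (b,a))
          = hatPiPiMat I (q:ℂ) y' (b,a) := by
      intro y' _
      rw [← Finset.sum_mul]
      have inner : (∑ p : Fin (I+1) × Fin (I+1), ∑ x' : Cfg (2*I),
          PiPiMat I p x' * Rring I (q:ℂ) ((κ:ℂ)^2) x' y') = 1 := by
        rw [Finset.sum_comm]
        have step : ∀ x' ∈ (Finset.univ : Finset (Cfg (2*I))),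
            (∑ p : Fin (I+1) × Fin (I+1), PiPiMat I p x' * Rring I (q:ℂ) ((κ:ℂ)^2) x' y')
              = Rring I (q:ℂ) ((κ:ℂ)^2) x' y' := by
          intro x' _
          rw [← Finset.sum_mul, hPiPicol x', one_mul]
        rw [Finset.sum_congr rfl step]
        exact hGood.2.2 y'
      rw [inner, one_mul]
    rw [Finset.sum_congr rfl key, hhatcol]
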